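/- Let n ≥ 1, let v ∈ ℝⁿ be a nonzero vector, and let s ≥ 1 be an integer. Then the stochastic quantization Q_s(v) is unbiased: E[Q_s(v)] = v, i.e., for every coordinate i, E[Q_s(v)_i] = v_i. -/

import Mathlib

open MeasureTheory ProbabilityTheory

/-- `Qv` is (a realization on the probability space `(Ω, μ)` of) the stochastic
quantization `Q_s(v)` of the nonzero vector `v ∈ ℝⁿ` with `s` quantization levels:
`Q_s(v)_i = ‖v‖₂ · sgn(vᵢ) · ξᵢ`, where the `ξᵢ` are independent, and, with
`aᵢ = |vᵢ|/‖v‖₂` and `ℓᵢ ∈ {0, …, s−1}` such that `aᵢ ∈ [ℓᵢ/s, (ℓᵢ+1)/s]`, `ξᵢ` takes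
the value `(ℓᵢ+1)/s` with probability `pᵢ = aᵢ·s − ℓᵢ` and `ℓᵢ/s` with probability
`1 − pᵢ`. -/
def IsStochQuant {n : ℕ} (s : ℕ) {Ω : Type*} [MeasurableSpace Ω] (μ : Measure Ω)
    (v : EuclideanSpace ℝ (Fin n)) (Qv : Ω → EuclideanSpace ℝ (Fin n)) : Prop :=
  ∃ (ξ : Fin n → Ω → ℝ) (ℓ : Fin n → ℕ),
    (∀ i, Measurable (ξ i)) ∧
    iIndepFun ξ μ ∧
    (∀ i, ℓ i ≤ s - 1) ∧
    (∀ i, (ℓ i : ℝ) / s ≤ |v i| / ‖v‖ ∧ |v i| / ‖v‖ ≤ ((ℓ i : ℝ) + 1) / s) ∧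
    (∀ i, μ {ω | ξ i ω = ((ℓ i : ℝ) + 1) / s} =
        ENNReal.ofReal (|v i| / ‖v‖ * s - ℓ i)) ∧
    (∀ i, μ {ω | ξ i ω = (ℓ i : ℝ) / s} =
        1 - ENNReal.ofReal (|v i| / ‖v‖ * s - ℓ i)) ∧
    (∀ ω i, Qv ω i = ‖v‖ * (if 0 ≤ v i then (1 : ℝ) else -1) * ξ i ω)

/-- **Unbiasedness of stochastic quantization:** `E[Q_s(v)] = v` coordinatewise. -/
theorem stochQuant_unbiased {n : ℕ} (hn : 1 ≤ n)
    (v : EuclideanSpace ℝ (Fin n)) (hv : v ≠ 0) (s : ℕ) (hs : 1 ≤ s)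
    {Ω : Type*} [MeasurableSpace Ω] (μ : Measure Ω) [IsProbabilityMeasure μ]
    (Qv : Ω → EuclideanSpace ℝ (Fin n)) (hQ : IsStochQuant s μ v Qv) :
    ∀ i, ∫ ω, Qv ω i ∂μ = v i := by
  obtain ⟨ξ, ℓ, hmeas, _hind, _hℓ, hbound, hhi, hlo, hQv⟩ := hQ
  intro i
  have hvnorm : (0:ℝ) < ‖v‖ := norm_pos_iff.mpr hv
  have hs0 : (0:ℝ) < s := by exact_mod_cast hs
  set a : ℝ := |v i| / ‖v‖ with ha
  set p : ℝ := a * s - ℓ i with hp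
  have hp0 : 0 ≤ p := by
    have h1 := (hbound i).1
    rw [div_le_iff₀ hs0] at h1
    simp only [hp]; linarith
  have hp1 : p ≤ 1 := by
    have h2 := (hbound i).2
    rw [le_div_iff₀ hs0] at h2
    simp only [hp]; linarith
  set hiv : ℝ := ((ℓ i : ℝ) + 1) / s with hhi_def
  set lov : ℝ := (ℓ i : ℝ) / s with hlo_def
  set A : Set Ω := {ω | ξ i ω = hiv} with hA
  set B : Set Ω := {ω | ξ i ω = lov} with hB
  have hAm : MeasurableSet A := (hmeas i) (measurableSet_singleton hiv)
  have hBm : MeasurableSet B := (hmeas i) (measurableSet_singleton lov)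
  have hne : hiv ≠ lov := by
    rw [hhi_def, hlo_def]
    intro h
    rw [div_eq_div_iff (ne_of_gt hs0) (ne_of_gt hs0)] at h
    nlinarith
  have hμA : μ A = ENNReal.ofReal p := hhi i
  have hμB : μ B = 1 - ENNReal.ofReal p := hlo i
  have hofp_le : ENNReal.ofReal p ≤ 1 := by
    rw [show (1 : ENNReal) = ENNReal.ofReal 1 by simp]
    exact ENNReal.ofReal_le_ofReal hp1
  have hdisj : Disjoint A B := by
    rw [Set.disjoint_left]
    intro ω hωA hωB
    exact hne (hωA.symm.trans hωB)
  have hcompl : μ (A ∪ B)ᶜ = 0 := by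
    have hfull : μ (A ∪ B) = 1 := by
      rw [measure_union hdisj hBm, hμA, hμB, add_tsub_cancel_of_le hofp_le]
    rw [measure_compl (hAm.union hBm) (by simp [hfull]), hfull, measure_univ]
    simp
  set g : Ω → ℝ := fun ω => A.indicator (fun _ => hiv) ω + B.indicator (fun _ => lov) ω with hg
  have hae : ξ i =ᵐ[μ] g := by
    rw [Filter.EventuallyEq, ae_iff]
    apply measure_mono_null _ hcompl
    intro ω hω
    simp only [Set.mem_setOf_eq] at hω
    simp only [Set.mem_compl_iff, Set.mem_union]
    rintro (hωA | hωB)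
    · apply hω
      simp only [hg, Set.indicator_of_mem hωA,
        Set.indicator_of_notMem (Set.disjoint_left.mp hdisj hωA)]
      rw [show ξ i ω = hiv from hωA]; ring
    · apply hω
      simp only [hg, Set.indicator_of_mem hωB,
        Set.indicator_of_notMem (Set.disjoint_right.mp hdisj hωB)]
      rw [show ξ i ω = lov from hωB]; ring
  have hintg : ∫ ω, ξ i ω ∂μ = a := by
    rw [integral_congr_ae hae]
    have h1 : Integrable (A.indicator (fun _ => hiv)) μ :=
      (integrable_const hiv).indicator hAm
    have h2 : Integrable (B.indicator (fun _ => lov)) μ :=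
      (integrable_const lov).indicator hBm
    rw [hg]
    rw [integral_add h1 h2, integral_indicator_const _ hAm, integral_indicator_const _ hBm,
      measureReal_def, measureReal_def, hμA, hμB]
    have htoA : (ENNReal.ofReal p).toReal = p := ENNReal.toReal_ofReal hp0
    have htoB : ((1 : ENNReal) - ENNReal.ofReal p).toReal = 1 - p := by
      rw [ENNReal.toReal_sub_of_le hofp_le (by simp)]
      simp [htoA]
    rw [htoA, htoB, smul_eq_mul, smul_eq_mul, hhi_def, hlo_def, hp]
    field_simp
    ring
  have hQi : ∫ ω, Qv ω i ∂μ = ‖v‖ * (if 0 ≤ v i then (1:ℝ) else -1) * a := by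
    have : ∀ ω, Qv ω i = ‖v‖ * (if 0 ≤ v i then (1:ℝ) else -1) * ξ i ω := fun ω => hQv ω i
    simp_rw [this]
    rw [integral_const_mul, hintg]
  rw [hQi, ha]
  by_cases h : 0 ≤ v i
  · rw [if_pos h, abs_of_nonneg h]
    field_simp
  · rw [if_neg h, abs_of_neg (lt_of_not_ge h)]
    field_simp
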